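/- Fix $\boldsymbol{\lambda}\in\mathbb{Z}_{\ge 0}^N$ with $|\boldsymbol{\lambda}|=n$ and suppose $\sum_{1\le i<j\le N}\lambda_i\lambda_j>0$. Then $\sum_{I\in\mathcal{I}_{\boldsymbol{\lambda}}} \frac{1}{R(I)} = 0$ as a rational function in $z_1,\dots,z_n$, where $\mathcal{I}_{\boldsymbol{\lambda}}$ is the set of decompositions $I=(I_1,\dots,I_N)$ of $\{1,\dots,n\}$ with $|I_i|=\lambda_i$, and $R(I)=\prod_{i<j}\prod_{a\in I_i,\,b\in I_j}(z_b-z_a)$. -/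

import Mathlib

open Finset MvPolynomial

/-- `R(I) = ∏_{i<j} ∏_{a ∈ I_i, b ∈ I_j} (z_b - z_a)` for the decomposition of `{1,…,n}`
encoded by `f : Fin n → Fin N` (with `I_j = f⁻¹(j)`). -/
noncomputable def Rpoly (N n : ℕ) (f : Fin n → Fin N) : MvPolynomial (Fin n) ℂ :=
  ∏ p ∈ univ.filter (fun p : Fin n × Fin n => f p.1 < f p.2), (X p.2 - X p.1)

/-- The Vandermonde polynomial `∏_{a<b} (z_b - z_a)`. -/
noncomputable def Dpoly (n : ℕ) : MvPolynomial (Fin n) ℂ :=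
  ∏ p ∈ univ.filter (fun p : Fin n × Fin n => p.1 < p.2), (X p.2 - X p.1)

/-- `∏_{a<b, f a = f b} (z_b - z_a)`. -/
noncomputable def Epoly (N n : ℕ) (f : Fin n → Fin N) : MvPolynomial (Fin n) ℂ :=
  ∏ p ∈ univ.filter (fun p : Fin n × Fin n => p.1 < p.2 ∧ f p.1 = f p.2), (X p.2 - X p.1)

/-- inversion count of `f`. -/
def invc (N n : ℕ) (f : Fin n → Fin N) : ℕ :=
  (univ.filter (fun p : Fin n × Fin n => f p.1 < f p.2 ∧ p.2 < p.1)).card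

/-- the signed complementary factor. -/
noncomputable def Tpoly (N n : ℕ) (f : Fin n → Fin N) : MvPolynomial (Fin n) ℂ :=
  (-1) ^ (invc N n f) * Epoly N n f

lemma XsubX_ne_zero {n : ℕ} {a b : Fin n} (h : a ≠ b) :
    (X b - X a : MvPolynomial (Fin n) ℂ) ≠ 0 :=
  sub_ne_zero.mpr fun he => h (MvPolynomial.X_injective he).symm

lemma Rpoly_ne_zero (N n : ℕ) (f : Fin n → Fin N) : Rpoly N n f ≠ 0 := by
  rw [Rpoly, Finset.prod_ne_zero_iff]
  intro p hp
  simp only [mem_filter] at hp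
  exact XsubX_ne_zero fun he => absurd hp.2 (by rw [he]; exact lt_irrefl _)

/-- key product identity: `R f * E f = (-1)^(invc f) * Δ`. -/
lemma RE_eq (N n : ℕ) (f : Fin n → Fin N) :
    Rpoly N n f * Epoly N n f = (-1) ^ (invc N n f) * Dpoly n := by
  classical
  set g : Fin n × Fin n → MvPolynomial (Fin n) ℂ := fun p => X p.2 - X p.1 with hg
  -- split R over p.1 < p.2 or not
  have hsplitR : Rpoly N n f =
      (∏ p ∈ univ.filter (fun p : Fin n × Fin n => p.1 < p.2 ∧ f p.1 < f p.2), g p) *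
      (∏ p ∈ univ.filter (fun p : Fin n × Fin n => f p.1 < f p.2 ∧ p.2 < p.1), g p) := by
    rw [Rpoly, ← Finset.prod_filter_mul_prod_filter_not
      (univ.filter (fun p : Fin n × Fin n => f p.1 < f p.2)) (fun p => p.1 < p.2) g,
      Finset.filter_filter, Finset.filter_filter]
    congr 2
    · ext p; simp only [mem_filter, mem_univ, true_and]; tauto
    · ext p; simp only [mem_filter, mem_univ, true_and]
      constructor
      · rintro ⟨h1, h2⟩
        refine ⟨h1, ?_⟩
        rcases lt_trichotomy p.1 p.2 with h | h | h
        · exact absurd h h2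
        · exfalso; rw [h] at h1; exact lt_irrefl _ h1
        · exact h
      · rintro ⟨h1, h2⟩; exact ⟨h1, not_lt_of_gt h2⟩
  -- the inverted part, re-oriented
  have hS : (∏ p ∈ univ.filter (fun p : Fin n × Fin n => f p.1 < f p.2 ∧ p.2 < p.1), g p)
      = (-1) ^ (invc N n f) *
        ∏ p ∈ univ.filter (fun p : Fin n × Fin n => p.1 < p.2 ∧ f p.2 < f p.1), g p := by
    have h1 : ∀ p : Fin n × Fin n, g p = (-1) * g p.swap := by
      intro p; simp only [hg, Prod.fst_swap, Prod.snd_swap]; ring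
    calc (∏ p ∈ univ.filter (fun p : Fin n × Fin n => f p.1 < f p.2 ∧ p.2 < p.1), g p)
        = ∏ p ∈ univ.filter (fun p : Fin n × Fin n => f p.1 < f p.2 ∧ p.2 < p.1),
            ((-1) * g p.swap) := Finset.prod_congr rfl (fun p _ => h1 p)
      _ = (-1) ^ (invc N n f) *
            ∏ p ∈ univ.filter (fun p : Fin n × Fin n => f p.1 < f p.2 ∧ p.2 < p.1), g p.swap := by
          rw [Finset.prod_mul_distrib, Finset.prod_const, invc]
      _ = (-1) ^ (invc N n f) *
            ∏ p ∈ univ.filter (fun p : Fin n × Fin n => p.1 < p.2 ∧ f p.2 < f p.1), g p := by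
          congr 1
          refine Finset.prod_nbij' (fun p => p.swap) (fun p => p.swap) ?_ ?_ ?_ ?_ ?_
          · intro p hp; simp only [mem_filter, mem_univ, true_and, Prod.fst_swap,
              Prod.snd_swap] at hp ⊢
            exact ⟨hp.2, hp.1⟩
          · intro p hp; simp only [mem_filter, mem_univ, true_and, Prod.fst_swap,
              Prod.snd_swap] at hp ⊢
            exact ⟨hp.2, hp.1⟩
          · intro p _; simp
          · intro p _; simp
          · intro p _; rfl
  -- split Δ by the trichotomy of f-values
  have hsplitD : Dpoly n =
      (∏ p ∈ univ.filter (fun p : Fin n × Fin n => p.1 < p.2 ∧ f p.1 < f p.2), g p) *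
      ((∏ p ∈ univ.filter (fun p : Fin n × Fin n => p.1 < p.2 ∧ f p.1 = f p.2), g p) *
       (∏ p ∈ univ.filter (fun p : Fin n × Fin n => p.1 < p.2 ∧ f p.2 < f p.1), g p)) := by
    rw [Dpoly, ← Finset.prod_filter_mul_prod_filter_not
      (univ.filter (fun p : Fin n × Fin n => p.1 < p.2)) (fun p => f p.1 < f p.2) g,
      Finset.filter_filter]
    congr 1
    rw [← Finset.prod_filter_mul_prod_filter_not
        ((univ.filter (fun p : Fin n × Fin n => p.1 < p.2)).filter
          (fun p => ¬ f p.1 < f p.2)) (fun p => f p.1 = f p.2) g,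
      Finset.filter_filter, Finset.filter_filter]
    congr 2
    · ext p; simp only [mem_filter, mem_univ, true_and]
      constructor
      · rintro ⟨h1, _, h3⟩; exact ⟨h1, h3⟩
      · rintro ⟨h1, h2⟩
        refine ⟨h1, ?_, h2⟩
        rw [h2]; exact lt_irrefl _
    · ext p; simp only [mem_filter, mem_univ, true_and]
      constructor
      · rintro ⟨⟨h1, h2⟩, h3⟩
        refine ⟨h1, ?_⟩
        rcases lt_trichotomy (f p.1) (f p.2) with h | h | h
        · exact absurd h h2
        · exact absurd h h3
        · exact h
      · rintro ⟨h1, h2⟩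
        refine ⟨⟨h1, not_lt_of_gt h2⟩, ?_⟩
        intro he; rw [he] at h2; exact lt_irrefl _ h2
  rw [Epoly, hsplitR, hS, hsplitD]
  ring

lemma Dpoly_eq_det (n : ℕ) :
    Dpoly n = (Matrix.vandermonde (fun i : Fin n => (X i : MvPolynomial (Fin n) ℂ))).det := by
  rw [Matrix.det_vandermonde, Dpoly]
  rw [Finset.prod_filter]
  rw [← Finset.univ_product_univ, Finset.prod_product]
  refine Finset.prod_congr rfl (fun i _ => ?_)
  rw [← Finset.prod_filter]
  refine Finset.prod_congr ?_ (fun _ _ => rfl)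
  ext y; simp

lemma rename_swap_D {n : ℕ} (a b : Fin n) (hab : a ≠ b) :
    rename (Equiv.swap a b) (Dpoly n) = -Dpoly n := by
  rw [Dpoly_eq_det]
  have h0 := RingHom.map_det
    ((rename (Equiv.swap a b) : MvPolynomial (Fin n) ℂ →ₐ[ℂ] MvPolynomial (Fin n) ℂ) :
      MvPolynomial (Fin n) ℂ →+* MvPolynomial (Fin n) ℂ)
    (Matrix.vandermonde fun i : Fin n => (X i : MvPolynomial (Fin n) ℂ))
  simp only [RingHom.coe_coe, RingHom.mapMatrix_apply] at h0
  rw [h0]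
  have h1 : (Matrix.vandermonde (fun i : Fin n => (X i : MvPolynomial (Fin n) ℂ))).map
      (rename (Equiv.swap a b)) =
      (Matrix.vandermonde (fun i : Fin n => (X i : MvPolynomial (Fin n) ℂ))).submatrix
        (Equiv.swap a b) id := by
    ext i j
    simp [Matrix.vandermonde, Matrix.map_apply, Matrix.submatrix_apply]
  rw [h1, Matrix.det_permute, Equiv.Perm.sign_swap hab]
  simp

lemma rename_swap_R {N n : ℕ} (f : Fin n → Fin N) (a b : Fin n) :
    rename (Equiv.swap a b) (Rpoly N n f) = Rpoly N n (f ∘ (Equiv.swap a b)) := by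
  rw [Rpoly, Rpoly, map_prod]
  simp only [map_sub, rename_X]
  refine Finset.prod_nbij' (fun p => (Equiv.swap a b p.1, Equiv.swap a b p.2))
    (fun p => (Equiv.swap a b p.1, Equiv.swap a b p.2)) ?_ ?_ ?_ ?_ ?_
  · intro p hp
    simp only [mem_filter, mem_univ, true_and, Function.comp_apply, Equiv.swap_apply_self] at hp ⊢
    exact hp
  · intro p hp
    simp only [mem_filter, mem_univ, true_and, Function.comp_apply] at hp ⊢
    exact hp
  · intro p _; simp [Equiv.swap_apply_self]
  · intro p _; simp [Equiv.swap_apply_self]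
  · intro p _; rfl

lemma RT_eq (N n : ℕ) (f : Fin n → Fin N) :
    Rpoly N n f * Tpoly N n f = Dpoly n := by
  rw [Tpoly, ← mul_assoc, mul_comm (Rpoly N n f), mul_assoc, RE_eq, ← mul_assoc, ← pow_add,
    Even.neg_one_pow ⟨invc N n f, rfl⟩, one_mul]

lemma rename_swap_T {N n : ℕ} (f : Fin n → Fin N) (a b : Fin n) (hab : a ≠ b) :
    rename (Equiv.swap a b) (Tpoly N n f) = -Tpoly N n (f ∘ (Equiv.swap a b)) := by
  have h1 := congrArg (rename (Equiv.swap a b) :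
    MvPolynomial (Fin n) ℂ →ₐ[ℂ] MvPolynomial (Fin n) ℂ) (RT_eq N n f)
  rw [map_mul, rename_swap_R, rename_swap_D _ _ hab, ← RT_eq N n (f ∘ (Equiv.swap a b)),
    ← mul_neg] at h1
  exact mul_left_cancel₀ (Rpoly_ne_zero N n _) h1

lemma card_pairs (n : ℕ) :
    (univ.filter (fun p : Fin n × Fin n => p.1 < p.2)).card = ∑ i : Fin n, (i : ℕ) := by
  rw [Finset.card_filter, ← Finset.univ_product_univ, Finset.sum_product_right]
  refine Finset.sum_congr rfl (fun j _ => ?_)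
  rw [← Finset.card_filter]
  have : (univ.filter (fun i : Fin n => (i, j).1 < (i, j).2)) = Finset.Iio j := by
    ext i; simp
  rw [this, Fin.card_Iio]

lemma sum_le_of_injective {n : ℕ} (g : Fin n → ℕ) (hg : Function.Injective g) :
    (∑ i : Fin n, (i : ℕ)) ≤ ∑ i, g i := by
  classical
  set σ := Tuple.sort g with hσ
  have hmono : Monotone (g ∘ σ) := Tuple.monotone_sort g
  have hsm : StrictMono (g ∘ σ) :=
    hmono.strictMono_of_injective (hg.comp σ.injective)
  have hle : ∀ k (hk : k < n), k ≤ g (σ ⟨k, hk⟩) := by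
    intro k
    induction k with
    | zero => intro hk; exact Nat.zero_le _
    | succ k ih =>
      intro hk
      have hk' : k < n := Nat.lt_of_succ_lt hk
      have h1 := ih hk'
      have h2 : g (σ ⟨k, hk'⟩) < g (σ ⟨k + 1, hk⟩) := hsm (by simp [Fin.lt_def])
      omega
  calc (∑ i : Fin n, (i : ℕ)) ≤ ∑ i : Fin n, g (σ i) :=
        Finset.sum_le_sum (fun i _ => hle i.1 i.2)
    _ = ∑ i, g i := Equiv.sum_comp σ g

lemma Tsum_eq_zero (N n : ℕ) (F : Finset (Fin n → Fin N))
    (hclosed : ∀ (a b : Fin n), a ≠ b → ∀ f ∈ F, f ∘ (Equiv.swap a b) ∈ F)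
    (hne : ∀ f ∈ F, ∃ a b : Fin n, a < b ∧ f a ≠ f b) :
    ∑ f ∈ F, Tpoly N n f = 0 := by
  classical
  set P := ∑ f ∈ F, Tpoly N n f with hP
  have halt : ∀ a b : Fin n, a ≠ b → rename (Equiv.swap a b) P = -P := by
    intro a b hab
    rw [hP, map_sum]
    rw [Finset.sum_congr rfl (fun f _ => rename_swap_T (N := N) f a b hab)]
    rw [Finset.sum_neg_distrib]
    congr 1
    refine Finset.sum_nbij' (fun f => f ∘ (Equiv.swap a b)) (fun f => f ∘ (Equiv.swap a b))
      (fun f hf => hclosed a b hab f hf) (fun f hf => hclosed a b hab f hf) ?_ ?_ ?_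
    · intro f _; funext x; simp [Equiv.swap_apply_self]
    · intro f _; funext x; simp [Equiv.swap_apply_self]
    · intro f _; rfl
  ext m
  rw [coeff_zero]
  by_cases hm : m ∈ P.support
  swap
  · exact notMem_support_iff.mp hm
  have hdeg : (∑ i, m i) < (univ.filter (fun p : Fin n × Fin n => p.1 < p.2)).card := by
    rw [hP] at hm
    obtain ⟨f, hfF, hmf⟩ := Finset.mem_biUnion.mp (MvPolynomial.support_sum hm)
    have h1 : (∑ i, m i) ≤ (Tpoly N n f).totalDegree := by
      have hle := MvPolynomial.le_totalDegree hmf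
      have h2 : m.sum (fun _ e => e) = ∑ i, m i := Finsupp.sum_fintype _ _ (fun _ => rfl)
      omega
    have hE : (Epoly N n f).totalDegree ≤
        (univ.filter (fun p : Fin n × Fin n => p.1 < p.2 ∧ f p.1 = f p.2)).card := by
      refine le_trans (MvPolynomial.totalDegree_finset_prod _ _) ?_
      rw [Finset.card_eq_sum_ones]
      refine Finset.sum_le_sum (fun p hp => ?_)
      rw [sub_eq_add_neg]
      refine le_trans (MvPolynomial.totalDegree_add _ _) ?_
      rw [MvPolynomial.totalDegree_neg]
      simp [MvPolynomial.totalDegree_X]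
    have h2 : (Tpoly N n f).totalDegree ≤
        (univ.filter (fun p : Fin n × Fin n => p.1 < p.2 ∧ f p.1 = f p.2)).card := by
      rw [Tpoly]
      rcases neg_one_pow_eq_or (MvPolynomial (Fin n) ℂ) (invc N n f) with h | h
      · rw [h, one_mul]; exact hE
      · rw [h, neg_one_mul, MvPolynomial.totalDegree_neg]; exact hE
    have h3 : (univ.filter (fun p : Fin n × Fin n => p.1 < p.2 ∧ f p.1 = f p.2)).card <
        (univ.filter (fun p : Fin n × Fin n => p.1 < p.2)).card := by
      obtain ⟨a, b, hab, hfab⟩ := hne f hfF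
      have hsub : (univ.filter (fun p : Fin n × Fin n => p.1 < p.2 ∧ f p.1 = f p.2)) ⊆
          (univ.filter (fun p : Fin n × Fin n => p.1 < p.2)) := by
        intro p hp
        simp only [mem_filter, mem_univ, true_and] at hp ⊢
        exact hp.1
      refine Finset.card_lt_card ((Finset.ssubset_iff_of_subset hsub).mpr ⟨(a, b), ?_, ?_⟩)
      · simp [hab]
      · simp [hab, hfab]
    omega
  obtain ⟨a, b, hab, hmab⟩ : ∃ a b : Fin n, a ≠ b ∧ m a = m b := by
    by_contra hc
    push_neg at hc
    have hinj : Function.Injective m := by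
      intro x y hxy
      by_contra hne'
      exact hc x y hne' hxy
    have := sum_le_of_injective m hinj
    rw [card_pairs] at hdeg
    omega
  have hmap : Finsupp.mapDomain (Equiv.swap a b) m = m := by
    rw [← Finsupp.equivMapDomain_eq_mapDomain]
    ext c
    rw [Finsupp.equivMapDomain_apply, Equiv.symm_swap]
    rcases eq_or_ne c a with rfl | hca
    · rw [Equiv.swap_apply_left]; exact hmab.symm
    rcases eq_or_ne c b with rfl | hcb
    · rw [Equiv.swap_apply_right]; exact hmab
    · rw [Equiv.swap_apply_of_ne_of_ne hca hcb]
  have h4 := MvPolynomial.coeff_rename_mapDomain (Equiv.swap a b) (Equiv.injective _) P m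
  rw [hmap, halt a b hab, MvPolynomial.coeff_neg] at h4
  have h5 : coeff m P + coeff m P = 0 := by linear_combination -h4
  exact add_self_eq_zero.mp h5

/-- Atiyah–Bott localization for `∫_{F_λ} 1 = 0` on a positive-dimensional partial flag
variety: if `∑_{i<j} λ_i λ_j > 0`, then `∑_{I ∈ I_λ} 1/R(I) = 0` as a rational function. -/
theorem stmt2 (N n : ℕ) (lam : Fin N → ℕ) (hsum : ∑ i, lam i = n)
    (hpos : 0 < ∑ p ∈ univ.filter (fun p : Fin N × Fin N => p.1 < p.2), lam p.1 * lam p.2) :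
    ∑ f ∈ univ.filter (fun f : Fin n → Fin N =>
        ∀ j, (univ.filter fun a => f a = j).card = lam j),
      (algebraMap (MvPolynomial (Fin n) ℂ) (FractionRing (MvPolynomial (Fin n) ℂ))
        (Rpoly N n f))⁻¹ = 0 := by
  classical
  set F := univ.filter (fun f : Fin n → Fin N =>
    ∀ j, (univ.filter fun a => f a = j).card = lam j) with hF
  obtain ⟨p0, hp0mem, hp0⟩ :
      ∃ p ∈ univ.filter (fun p : Fin N × Fin N => p.1 < p.2), lam p.1 * lam p.2 ≠ 0 :=
    Finset.exists_ne_zero_of_sum_ne_zero hpos.ne'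
  have hij : p0.1 < p0.2 := (mem_filter.mp hp0mem).2
  obtain ⟨hlami, hlamj⟩ := Nat.mul_ne_zero_iff.mp hp0
  have hclosed : ∀ (a b : Fin n), a ≠ b → ∀ f ∈ F, f ∘ (Equiv.swap a b) ∈ F := by
    intro a b hab f hf
    rw [hF, mem_filter] at hf ⊢
    refine ⟨mem_univ _, fun j => ?_⟩
    rw [← hf.2 j]
    apply Finset.card_bij (fun x _ => Equiv.swap a b x)
    · intro x hx
      simp only [mem_filter, mem_univ, true_and, Function.comp_apply] at hx ⊢
      exact hx
    · intro x _ y _ h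
      exact (Equiv.swap a b).injective h
    · intro y hy
      refine ⟨Equiv.swap a b y, ?_, by simp [Equiv.swap_apply_self]⟩
      simp only [mem_filter, mem_univ, true_and, Function.comp_apply,
        Equiv.swap_apply_self] at hy ⊢
      exact hy
  have hne : ∀ f ∈ F, ∃ a b : Fin n, a < b ∧ f a ≠ f b := by
    intro f hf
    rw [hF, mem_filter] at hf
    obtain ⟨x, hx⟩ : (univ.filter fun a => f a = p0.1).Nonempty :=
      Finset.card_pos.mp (by rw [hf.2]; exact Nat.pos_of_ne_zero hlami)
    obtain ⟨y, hy⟩ : (univ.filter fun a => f a = p0.2).Nonempty :=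
      Finset.card_pos.mp (by rw [hf.2]; exact Nat.pos_of_ne_zero hlamj)
    have hfx : f x = p0.1 := (mem_filter.mp hx).2
    have hfy : f y = p0.2 := (mem_filter.mp hy).2
    have hfxy : f x ≠ f y := by rw [hfx, hfy]; exact hij.ne
    have hxy : x ≠ y := fun h => hfxy (by rw [h])
    rcases lt_or_gt_of_ne hxy with h | h
    · exact ⟨x, y, h, hfxy⟩
    · exact ⟨y, x, h, hfxy.symm⟩
  have hP := Tsum_eq_zero N n F hclosed hne
  set A := algebraMap (MvPolynomial (Fin n) ℂ) (FractionRing (MvPolynomial (Fin n) ℂ)) with hA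
  have hDne : Dpoly n ≠ 0 := by
    rw [Dpoly, Finset.prod_ne_zero_iff]
    intro p hp
    exact XsubX_ne_zero ((mem_filter.mp hp).2).ne
  have hmapD : A (Dpoly n) ≠ 0 := fun h => hDne (IsFractionRing.to_map_eq_zero_iff.mp h)
  have key : ∀ f : Fin n → Fin N,
      (A (Rpoly N n f))⁻¹ = A (Tpoly N n f) * (A (Dpoly n))⁻¹ := by
    intro f
    have hR : A (Rpoly N n f) ≠ 0 :=
      fun h => Rpoly_ne_zero N n f (IsFractionRing.to_map_eq_zero_iff.mp h)
    have hRT : A (Rpoly N n f) * A (Tpoly N n f) = A (Dpoly n) := by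
      rw [← map_mul, RT_eq]
    rw [eq_comm]
    apply eq_inv_of_mul_eq_one_left
    have h6 : A (Tpoly N n f) * (A (Dpoly n))⁻¹ * A (Rpoly N n f) =
        A (Rpoly N n f) * A (Tpoly N n f) * (A (Dpoly n))⁻¹ := by ring
    rw [h6, hRT, mul_inv_cancel₀ hmapD]
  calc ∑ f ∈ F, (A (Rpoly N n f))⁻¹
      = ∑ f ∈ F, A (Tpoly N n f) * (A (Dpoly n))⁻¹ :=
        Finset.sum_congr rfl (fun f _ => key f)
    _ = (A (∑ f ∈ F, Tpoly N n f)) * (A (Dpoly n))⁻¹ := by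
        rw [map_sum, Finset.sum_mul]
    _ = 0 := by rw [hP, map_zero, zero_mul]
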